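/- Let R be a ring such that every left primitive ideal of R contains a regular element. Then R is a left small ring, i.e. R as a left R-module is a small module. -/

import Mathlib

universe u

/-- A left `R`-module `K` is a *small module* if there exist a left `R`-module `L` and an
injective `R`-linear map `f : K → L` whose image is a superfluous submodule of `L`. -/
def IsSmallModule (R : Type u) [Ring R] (K : Type u) [AddCommGroup K] [Module R K] : Prop :=
  ∃ (L : Type u) (_ : AddCommGroup L) (_ : Module R L) (f : K →ₗ[R] L),
    Function.Injective f ∧
      ∀ X : Submodule R L, LinearMap.range f ⊔ X = ⊤ → X = ⊤

/-- If every left primitive ideal of `R` (the annihilator of a simple left `R`-module) contains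
a regular element (neither a left nor a right zero divisor), then `R` is a left small ring. -/
theorem stmt_1 (R : Type u) [Ring R]
    (h : ∀ (M : Type u) [AddCommGroup M] [Module R M], IsSimpleModule R M →
      ∃ r ∈ Module.annihilator R M, (∀ b : R, r * b = 0 → b = 0) ∧ (∀ b : R, b * r = 0 → b = 0)) :
    IsSmallModule R R := by
  classical
  -- embed R into an injective module
  let Eobj := CategoryTheory.Injective.under (ModuleCat.of R R)
  let E : Type u := Eobj
  let f : R →ₗ[R] E := (CategoryTheory.Injective.ι (ModuleCat.of R R)).hom
  have hf : Function.Injective f := by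
    have : CategoryTheory.Mono (CategoryTheory.Injective.ι (ModuleCat.of R R)) := inferInstance
    exact (ModuleCat.mono_iff_injective _).mp this
  have hEinj : Module.Injective R E := by
    have : CategoryTheory.Injective (ModuleCat.of R E) := by
      exact CategoryTheory.Injective.injective_under (ModuleCat.of R R)
    exact Module.injective_module_of_injective_object R E
  refine ⟨E, inferInstance, inferInstance, f, hf, ?_⟩
  intro X hX
  by_contra hX'
  set I : Ideal R := X.comap f with hIdef
  have hI : I ≠ ⊤ := by
    intro h1
    apply hX'
    have h1' : f 1 ∈ X := by
      have : (1 : R) ∈ I := h1 ▸ Submodule.mem_top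
      exact this
    have hle : LinearMap.range f ≤ X := by
      rintro _ ⟨a, rfl⟩
      have : f a = a • f 1 := by rw [← map_smul, smul_eq_mul, mul_one]
      rw [this]; exact X.smul_mem a h1'
    rwa [sup_eq_right.mpr hle] at hX
  obtain ⟨m, hm, hIm⟩ := Ideal.exists_le_maximal I hI
  have hsimple : IsSimpleModule R (R ⧸ m) :=
    isSimpleModule_iff_isCoatom.mpr hm.out
  obtain ⟨r, hrann, -, hrr⟩ := h (R ⧸ m) hsimple
  have hrm : ∀ b : R, r * b ∈ m := by
    intro b
    have := Module.mem_annihilator.mp hrann (Submodule.Quotient.mk b)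
    rwa [← Submodule.Quotient.mk_smul, smul_eq_mul, Submodule.Quotient.mk_eq_zero] at this
  -- divisibility: f 1 = r • e' for some e'
  have hρ : Function.Injective (LinearMap.toSpanSingleton R R r) := by
    intro a b hab
    simp only [LinearMap.toSpanSingleton_apply, smul_eq_mul] at hab
    have hz : (a - b) * r = 0 := by rw [sub_mul, hab, sub_self]
    exact sub_eq_zero.mp (hrr _ hz)
  obtain ⟨ψ, hψ⟩ := hEinj.out (LinearMap.toSpanSingleton R R r) hρ
    (LinearMap.toSpanSingleton R E (f 1))
  have key : f 1 = r • ψ 1 := by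
    have := hψ 1
    simp [LinearMap.toSpanSingleton_apply] at this
    rw [← this, ← map_smul, smul_eq_mul, mul_one]
  obtain ⟨y, hy, x, hx, hyx⟩ := Submodule.mem_sup.mp (hX ▸ Submodule.mem_top (x := ψ 1))
  obtain ⟨a, rfl⟩ := hy
  have hmem : (1 : R) - r * a ∈ I := by
    show f (1 - r * a) ∈ X
    have : f (1 - r * a) = r • x := by
      rw [map_sub, key, ← hyx, smul_add, ← map_smul, smul_eq_mul]
      abel
    rw [this]
    exact X.smul_mem r hx
  have : (1 : R) ∈ m := by
    have := m.add_mem (hIm hmem) (hrm a)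
    simpa using this
  exact hm.ne_top (Ideal.eq_top_iff_one m |>.mpr this)
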